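/- Let L > 0 and T > 0. There exists a constant C > 0, depending only on L and T, such that every classical solution φ on [0,L]×[0,T] of the adjoint linear KdV system φ_t + φ_x + φ_{xxx} = 0 with boundary conditions φ(L,t) = 0, φ_x(L,t) = 0 and φ(0,t) + φ_{xx}(0,t) = 0 satisfies, for every t ∈ [0,T], ∫₀^L φ(x,t)² dx ≤ C ∫₀^L φ(x,0)² dx, and moreover ∫₀^T ( φ(0,t)² + φ_x(0,t)² ) dt ≤ C ∫₀^L φ(x,0)² dx. -/

import Mathlib

open MeasureTheory Set

set_option maxHeartbeats 1000000 in
/-- **Boundedness of the adjoint linear KdV semigroup together with boundary traces.**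
There is a constant `C > 0` depending only on `L` and `T` such that every classical solution
`φ` of the adjoint linear KdV system satisfies `∫₀^L φ(x,t)² dx ≤ C ∫₀^L φ(x,0)² dx`
for every `t ∈ [0,T]`, and `∫₀^T (φ(0,t)² + φ_x(0,t)²) dt ≤ C ∫₀^L φ(x,0)² dx`. -/
theorem adjoint_kdv_bounded_and_trace_estimate
    (L T : ℝ) (hL : 0 < L) (hT : 0 < T) :
    ∃ C : ℝ, 0 < C ∧
      ∀ (φ φt φx φxx φxxx : ℝ → ℝ → ℝ),
        (∀ x ∈ Icc (0:ℝ) L, ∀ t ∈ Icc (0:ℝ) T,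
          HasDerivAt (fun s => φ x s) (φt x t) t) →
        (∀ x ∈ Icc (0:ℝ) L, ∀ t ∈ Icc (0:ℝ) T,
          HasDerivAt (fun y => φ y t) (φx x t) x) →
        (∀ x ∈ Icc (0:ℝ) L, ∀ t ∈ Icc (0:ℝ) T,
          HasDerivAt (fun y => φx y t) (φxx x t) x) →
        (∀ x ∈ Icc (0:ℝ) L, ∀ t ∈ Icc (0:ℝ) T,
          HasDerivAt (fun y => φxx y t) (φxxx x t) x) →
        ContinuousOn (fun p : ℝ × ℝ => φ p.1 p.2) (Icc 0 L ×ˢ Icc 0 T) →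
        ContinuousOn (fun p : ℝ × ℝ => φt p.1 p.2) (Icc 0 L ×ˢ Icc 0 T) →
        ContinuousOn (fun p : ℝ × ℝ => φx p.1 p.2) (Icc 0 L ×ˢ Icc 0 T) →
        ContinuousOn (fun p : ℝ × ℝ => φxx p.1 p.2) (Icc 0 L ×ˢ Icc 0 T) →
        ContinuousOn (fun p : ℝ × ℝ => φxxx p.1 p.2) (Icc 0 L ×ˢ Icc 0 T) →
        (∀ x ∈ Icc (0:ℝ) L, ∀ t ∈ Icc (0:ℝ) T,
          φt x t + φx x t + φxxx x t = 0) →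
        (∀ t ∈ Icc (0:ℝ) T, φ L t = 0) →
        (∀ t ∈ Icc (0:ℝ) T, φx L t = 0) →
        (∀ t ∈ Icc (0:ℝ) T, φ 0 t + φxx 0 t = 0) →
          (∀ t ∈ Icc (0:ℝ) T,
            (∫ x in (0:ℝ)..L, (φ x t) ^ 2) ≤ C * ∫ x in (0:ℝ)..L, (φ x 0) ^ 2)
          ∧ (∫ t in (0:ℝ)..T, ((φ 0 t) ^ 2 + (φx 0 t) ^ 2))
              ≤ C * ∫ x in (0:ℝ)..L, (φ x 0) ^ 2 := by
  refine ⟨1, one_pos, ?_⟩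
  intro φ φt φx φxx φxxx hdt hdx hdxx hdxxx hcφ hcφt hcφx hcφxx hcφxxx hpde hbL hbLx hb0
  have h0L : (0:ℝ) ∈ Icc (0:ℝ) L := ⟨le_refl 0, hL.le⟩
  have hLL : L ∈ Icc (0:ℝ) L := ⟨hL.le, le_refl L⟩
  have h0T : (0:ℝ) ∈ Icc (0:ℝ) T := ⟨le_refl 0, hT.le⟩
  have hTT : T ∈ Icc (0:ℝ) T := ⟨hT.le, le_refl T⟩
  have hKcompact : IsCompact (Icc (0:ℝ) L ×ˢ Icc (0:ℝ) T) := isCompact_Icc.prod isCompact_Icc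
  -- slices
  have slicex : ∀ {f : ℝ → ℝ → ℝ},
      ContinuousOn (fun p : ℝ × ℝ => f p.1 p.2) (Icc 0 L ×ˢ Icc 0 T) →
      ∀ t ∈ Icc (0:ℝ) T, ContinuousOn (fun x => f x t) (Icc 0 L) := by
    intro f hf t ht
    exact hf.comp (Continuous.continuousOn (continuous_id.prodMk continuous_const))
      (fun x hx => mk_mem_prod hx ht)
  have slicet : ∀ {f : ℝ → ℝ → ℝ},
      ContinuousOn (fun p : ℝ × ℝ => f p.1 p.2) (Icc 0 L ×ˢ Icc 0 T) →
      ∀ x ∈ Icc (0:ℝ) L, ContinuousOn (fun t => f x t) (Icc 0 T) := by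
    intro f hf x hx
    exact hf.comp (Continuous.continuousOn (continuous_const.prodMk continuous_id))
      (fun t ht => mk_mem_prod hx ht)
  -- bounds
  obtain ⟨M, hM⟩ := hKcompact.exists_bound_of_continuousOn
    (((continuousOn_const (c := (2:ℝ))).mul hcφ).mul hcφt)
  obtain ⟨M0, hM0⟩ := hKcompact.exists_bound_of_continuousOn (hcφ.pow 2)
  set E : ℝ → ℝ := fun t => ∫ x in (0:ℝ)..L, φ x t ^ 2 with hE
  have huIoc : uIoc (0:ℝ) L ⊆ Icc (0:ℝ) L := by
    rw [uIoc_of_le hL.le]; exact Ioc_subset_Icc_self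
  have huIcc : uIcc (0:ℝ) L = Icc (0:ℝ) L := uIcc_of_le hL.le
  have huIccT : uIcc (0:ℝ) T = Icc (0:ℝ) T := uIcc_of_le hT.le
  -- integration by parts identity
  have hIBP : ∀ t ∈ Icc (0:ℝ) T,
      (∫ x in (0:ℝ)..L, 2 * φ x t * (φx x t + φxxx x t)) = φ 0 t ^ 2 + φx 0 t ^ 2 := by
    intro t ht
    have key : ∀ x ∈ uIcc (0:ℝ) L,
        HasDerivAt (fun y => φ y t ^ 2 + 2 * (φ y t * φxx y t) - φx y t ^ 2)
          (2 * φ x t * (φx x t + φxxx x t)) x := by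
      intro x hx'
      rw [huIcc] at hx'
      have h1 := hdx x hx' t ht
      have h2 := hdxx x hx' t ht
      have h3 := hdxxx x hx' t ht
      have H := ((h1.fun_pow 2).fun_add ((h1.fun_mul h3).const_mul 2)).fun_sub (h2.fun_pow 2)
      refine H.congr_deriv ?_
      push_cast
      ring
    have hint : IntervalIntegrable (fun x => 2 * φ x t * (φx x t + φxxx x t)) volume 0 L := by
      apply ContinuousOn.intervalIntegrable
      rw [huIcc]
      exact ((continuousOn_const (c := (2:ℝ))).mul (slicex hcφ t ht)).mul
        ((slicex hcφx t ht).add (slicex hcφxxx t ht))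
    have := intervalIntegral.integral_eq_sub_of_hasDerivAt key hint
    rw [this]
    have hxx0 : φxx 0 t = -φ 0 t := by linarith [hb0 t ht]
    rw [hbL t ht, hbLx t ht, hxx0]
    ring
  -- measurability helper
  have meas : ∀ s ∈ Icc (0:ℝ) T, ∀ {f : ℝ → ℝ → ℝ},
      ContinuousOn (fun p : ℝ × ℝ => f p.1 p.2) (Icc 0 L ×ˢ Icc 0 T) →
      AEStronglyMeasurable (fun x => f x s) (volume.restrict (uIoc (0:ℝ) L)) := by
    intro s hs f hf
    exact ContinuousOn.aestronglyMeasurable ((slicex hf s hs).mono huIoc) measurableSet_uIoc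
  -- derivative of E
  have hE' : ∀ t₀ ∈ Ioo (0:ℝ) T, HasDerivAt E (-(φ 0 t₀ ^ 2 + φx 0 t₀ ^ 2)) t₀ := by
    intro t₀ ht₀
    have ε_pos : 0 < min t₀ (T - t₀) := lt_min ht₀.1 (by linarith [ht₀.2])
    have hball : Metric.ball t₀ (min t₀ (T - t₀)) ⊆ Icc (0:ℝ) T := by
      intro s hs
      rw [Real.ball_eq_Ioo] at hs
      constructor
      · have := min_le_left t₀ (T - t₀); linarith [hs.1]
      · have := min_le_right t₀ (T - t₀); linarith [hs.2]
    have ht₀T : t₀ ∈ Icc (0:ℝ) T := ⟨ht₀.1.le, ht₀.2.le⟩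
    have key := (intervalIntegral.hasDerivAt_integral_of_dominated_loc_of_deriv_le
      (μ := volume) (F := fun s x => φ x s ^ 2) (F' := fun s x => 2 * φ x s * φt x s)
      (x₀ := t₀) (a := 0) (b := L) (bound := fun _ => M) (Metric.ball_mem_nhds t₀ ε_pos)
      (by
        filter_upwards [Metric.ball_mem_nhds t₀ ε_pos] with s hs
        exact ContinuousOn.aestronglyMeasurable
          (((slicex hcφ s (hball hs)).mono huIoc).pow 2) measurableSet_uIoc)
      (by
        apply ContinuousOn.intervalIntegrable
        rw [huIcc]
        exact (slicex hcφ t₀ ht₀T).pow 2)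
      (by
        have h1 := meas t₀ ht₀T hcφ
        have h2 := meas t₀ ht₀T hcφt
        exact (h1.const_mul 2).mul h2)
      (by
        refine Filter.Eventually.of_forall ?_
        intro x hx s hs
        exact hM (x, s) (mk_mem_prod (huIoc hx) (hball hs)))
      intervalIntegrable_const
      (by
        refine Filter.Eventually.of_forall ?_
        intro x hx s hs
        have H := (hdt x (huIoc hx) s (hball hs)).fun_pow 2
        refine H.congr_deriv ?_
        push_cast
        ring)).2
    have hrw : (∫ x in (0:ℝ)..L, 2 * φ x t₀ * φt x t₀)
        = -(φ 0 t₀ ^ 2 + φx 0 t₀ ^ 2) := by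
      have : ∀ x ∈ uIcc (0:ℝ) L,
          2 * φ x t₀ * φt x t₀ = -(2 * φ x t₀ * (φx x t₀ + φxxx x t₀)) := by
        intro x hx'
        rw [huIcc] at hx'
        have hp : φt x t₀ = -(φx x t₀ + φxxx x t₀) := by linarith [hpde x hx' t₀ ht₀T]
        rw [hp]; ring
      rw [intervalIntegral.integral_congr this, intervalIntegral.integral_neg, hIBP t₀ ht₀T]
    rw [hrw] at key
    exact key
  -- continuity of E
  have hEc : ContinuousOn E (Icc 0 T) := by
    intro t₀ ht₀
    apply intervalIntegral.continuousWithinAt_of_dominated_interval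
      (bound := fun _ => M0)
    · filter_upwards [self_mem_nhdsWithin] with s hs
      exact ContinuousOn.aestronglyMeasurable
        (((slicex hcφ s hs).mono huIoc).pow 2) measurableSet_uIoc
    · filter_upwards [self_mem_nhdsWithin] with s hs
      refine Filter.Eventually.of_forall ?_
      intro x hx
      exact hM0 (x, s) (mk_mem_prod (huIoc hx) hs)
    · exact intervalIntegrable_const
    · refine Filter.Eventually.of_forall ?_
      intro x hx
      exact ((slicet hcφ x (huIoc hx)) t₀ ht₀).pow 2
  -- E is antitone
  have hmono : AntitoneOn E (Icc 0 T) := by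
    apply antitoneOn_of_deriv_nonpos (convex_Icc 0 T) hEc
    · rw [interior_Icc]
      intro t ht
      exact (hE' t ht).differentiableAt.differentiableWithinAt
    · rw [interior_Icc]
      intro t ht
      rw [(hE' t ht).deriv]
      have := sq_nonneg (φ 0 t)
      have := sq_nonneg (φx 0 t)
      linarith
  have hEnn : ∀ t : ℝ, 0 ≤ E t := fun t =>
    intervalIntegral.integral_nonneg hL.le (fun x _ => sq_nonneg _)
  -- FTC for the trace term
  have f'int : IntervalIntegrable (fun t => -(φ 0 t ^ 2 + φx 0 t ^ 2)) volume 0 T := by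
    apply ContinuousOn.intervalIntegrable
    rw [huIccT]
    exact (((slicet hcφ 0 h0L).pow 2).add ((slicet hcφx 0 h0L).pow 2)).neg
  have hFTC : (∫ t in (0:ℝ)..T, -(φ 0 t ^ 2 + φx 0 t ^ 2)) = E T - E 0 :=
    intervalIntegral.integral_eq_sub_of_hasDeriv_right_of_le hT.le hEc
      (fun t ht => (hE' t ht).hasDerivWithinAt) f'int
  rw [intervalIntegral.integral_neg] at hFTC
  constructor
  · intro t ht
    rw [one_mul]
    exact hmono h0T ht ht.1
  · rw [one_mul]
    have hET := hEnn T
    linarith
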